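/- For all real x with sin(b x) ≠ 0 and real a > 0, 1/(cosh(a x) + cos(b x)) = −(2/sin(b x)) · ∑_{n=1}^∞ (−1)^n e^{−a n x} sin(n b x), the series converging absolutely for x > 0. -/

import Mathlib

open Real

theorem stmt_13 (a b x : ℝ) (ha : 0 < a) (hx : 0 < x) (hs : Real.sin (b * x) ≠ 0) :
    1 / (Real.cosh (a * x) + Real.cos (b * x)) =
      -(2 / Real.sin (b * x)) *
        ∑' n : ℕ, (-1 : ℝ) ^ (n + 1) * Real.exp (-a * (n + 1) * x) *
          Real.sin ((n + 1) * b * x) := by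
  set q := Real.exp (-(a * x)) with hqdef
  have hq0 : 0 < q := Real.exp_pos _
  have hq1 : q < 1 := by
    rw [hqdef, Real.exp_lt_one_iff]; nlinarith
  set c := Real.cos (b * x) with hcdef
  set s := Real.sin (b * x) with hsdef
  set z : ℂ := -(q : ℂ) * Complex.exp ((b * x : ℝ) * Complex.I) with hzdef
  have hznorm : ‖z‖ < 1 := by
    rw [hzdef, norm_mul, norm_neg, Complex.norm_real, Complex.norm_exp_ofReal_mul_I]
    simpa [abs_of_pos hq0] using hq1
  -- the terms are the imaginary parts of z^(n+1)
  have hterm : ∀ n : ℕ, (z ^ (n + 1)).im =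
      (-1 : ℝ) ^ (n + 1) * Real.exp (-a * (n + 1) * x) * Real.sin ((n + 1) * b * x) := by
    intro n
    rw [hzdef, mul_pow, ← Complex.exp_nat_mul]
    have h1 : (-(q : ℂ)) ^ (n + 1) = ((((-1 : ℝ)) ^ (n + 1) * q ^ (n + 1) : ℝ) : ℂ) := by
      push_cast; ring
    rw [h1]
    have h2 : ((n + 1 : ℕ) : ℂ) * ((b * x : ℝ) * Complex.I) =
        (((n + 1 : ℕ) * b * x : ℝ) : ℂ) * Complex.I := by push_cast; ring
    rw [h2, Complex.im_ofReal_mul, Complex.exp_ofReal_mul_I_im]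
    have h3 : q ^ (n + 1) = Real.exp (-a * (n + 1) * x) := by
      rw [hqdef, ← Real.exp_nat_mul]
      congr 1
      push_cast; ring
    rw [h3]
    push_cast
    ring
  have hsummable : Summable (fun n : ℕ => z ^ (n + 1)) := by
    have h := (summable_geometric_of_norm_lt_one hznorm).mul_left z
    exact h.congr fun n => (pow_succ' z n).symm
  have htsum : ∑' n : ℕ, z ^ (n + 1) = z * (1 - z)⁻¹ := by
    calc ∑' n : ℕ, z ^ (n + 1) = ∑' n : ℕ, z * z ^ n := by
          exact tsum_congr fun n => pow_succ' z n
      _ = z * ∑' n : ℕ, z ^ n := tsum_mul_left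
      _ = z * (1 - z)⁻¹ := by rw [tsum_geometric_of_norm_lt_one hznorm]
  have him : ∑' n : ℕ, (-1 : ℝ) ^ (n + 1) * Real.exp (-a * (n + 1) * x) *
      Real.sin ((n + 1) * b * x) = (z * (1 - z)⁻¹).im := by
    rw [← htsum, Complex.im_tsum hsummable]
    exact tsum_congr fun n => (hterm n).symm
  have hzre : z.re = -(q * c) := by
    rw [hzdef]
    simp only [Complex.mul_re, Complex.neg_re, Complex.neg_im, Complex.ofReal_re,
      Complex.ofReal_im, Complex.exp_ofReal_mul_I_re, Complex.exp_ofReal_mul_I_im, hcdef]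
    ring
  have hzim : z.im = -(q * s) := by
    rw [hzdef]
    simp only [Complex.mul_im, Complex.neg_re, Complex.neg_im, Complex.ofReal_re,
      Complex.ofReal_im, Complex.exp_ofReal_mul_I_re, Complex.exp_ofReal_mul_I_im, hsdef]
    ring
  have hqs : q * s ≠ 0 := mul_ne_zero hq0.ne' hs
  have hDpos : 0 < (1 + q * c) ^ 2 + (q * s) ^ 2 := by positivity
  have hval : (z * (1 - z)⁻¹).im = -(q * s) / ((1 + q * c) ^ 2 + (q * s) ^ 2) := by
    rw [Complex.mul_im, Complex.inv_im, Complex.inv_re, Complex.normSq_apply,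
      Complex.sub_re, Complex.sub_im, Complex.one_re, Complex.one_im, hzre, hzim]
    have hEq : (1 - -(q * c)) * (1 - -(q * c)) + (0 - -(q * s)) * (0 - -(q * s)) =
        (1 + q * c) ^ 2 + (q * s) ^ 2 := by ring
    rw [hEq]
    field_simp
    ring
  rw [him, hval]
  have hpyth : s ^ 2 + c ^ 2 = 1 := by
    rw [hsdef, hcdef]; exact Real.sin_sq_add_cos_sq (b * x)
  have hE : Real.exp (a * x) * q = 1 := by
    rw [hqdef, ← Real.exp_add]; simp
  have hcosh : Real.cosh (a * x) = (Real.exp (a * x) + q) / 2 := by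
    rw [Real.cosh_eq, hqdef]
  have hden : Real.cosh (a * x) + c = ((1 + q * c) ^ 2 + (q * s) ^ 2) / (2 * q) := by
    rw [hcosh]
    rw [div_add' _ _ _ (two_ne_zero), div_eq_div_iff (two_ne_zero) (by positivity)]
    linear_combination 2 * hE - 2 * q ^ 2 * hpyth
  rw [hden, one_div_div]
  field_simp
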